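/- Assume each column Xⱼ of X ∈ ℝ^{n×p} satisfies ‖Xⱼ‖₂² = n, that ε ∈ ℝⁿ has independent N(0, σ²) coordinates for some σ > 0, and that y = Xβ* + ε. For any L > 0, let β̌_λ be any minimizer over β ∈ ℝᵖ of the organic lasso objective (1/n)·‖y − Xβ‖₂² + 2λ·‖β‖₁² with λ = √((2·log p + 2L)/n). Then, with probability at least 1 − e^{−L}, (1/n)·‖Xβ̌_λ − Xβ*‖₂² ≤ (σ² + 4·‖β*‖₁²)·√((2·log p + 2L)/n). -/

import Mathlib

open MeasureTheory ProbabilityTheory Matrix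
open scoped ENNReal

noncomputable section

/-- squared Euclidean norm on ℝⁿ -/
def l2sq {n : ℕ} (v : Fin n → ℝ) : ℝ := ∑ i, (v i) ^ 2

/-- ℓ₁ norm on ℝᵖ -/
def l1 {p : ℕ} (b : Fin p → ℝ) : ℝ := ∑ j, |b j|

/-- sup norm on ℝᵖ -/
def linf {p : ℕ} (v : Fin p → ℝ) : ℝ := ⨆ j, |v j|

open Real
open scoped NNReal

namespace OrganicAux

variable {Ω : Type} [MeasureSpace Ω] [IsProbabilityMeasure (ℙ : Measure Ω)]

lemma gauss_conv_pdf (v1 v2 : ℝ≥0) (h1 : v1 ≠ 0) (h2 : v2 ≠ 0) (y : ℝ) :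
    ∫ x, gaussianPDFReal 0 v1 x * gaussianPDFReal y v2 x
      = gaussianPDFReal 0 (v1+v2) y := by
  have ha : (0:ℝ) < v1 := by positivity
  have hb : (0:ℝ) < v2 := by positivity
  set a : ℝ := (v1:ℝ) with haa
  set b : ℝ := (v2:ℝ) with hbb
  have hab : (0:ℝ) < a + b := by linarith
  set B : ℝ := (a+b)/(2*a*b) with hB
  have hBpos : 0 < B := by positivity
  set c : ℝ := a*y/(a+b) with hc
  have key : ∀ x : ℝ, gaussianPDFReal 0 v1 x * gaussianPDFReal y v2 x
      = ((√(2*π*a))⁻¹ * (√(2*π*b))⁻¹ * rexp (-y^2/(2*(a+b)))) * rexp (-B*(x-c)^2) := by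
    intro x
    simp only [gaussianPDFReal, ← haa, ← hbb]
    rw [mul_mul_mul_comm, ← Real.exp_add]
    have : -(x-0)^2/(2*a) + -(x-y)^2/(2*b) = -y^2/(2*(a+b)) + -B*(x-c)^2 := by
      rw [hB, hc]; field_simp; ring
    rw [this, Real.exp_add]
    ring
  rw [integral_congr_ae (Filter.Eventually.of_forall key), integral_const_mul]
  have hshift : ∫ x, rexp (-B*(x-c)^2) = ∫ x, rexp (-B*x^2) := by
    exact integral_sub_right_eq_self (fun x => rexp (-B*x^2)) c
  rw [hshift, integral_gaussian]
  have hcast : ((v1+v2 : ℝ≥0) : ℝ) = a + b := by push_cast; ring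
  simp only [gaussianPDFReal, hcast, sub_zero]
  have hconst : (√(2*π*a))⁻¹ * (√(2*π*b))⁻¹ * √(π/B) = (√(2*π*(a+b)))⁻¹ := by
    rw [← Real.sqrt_inv, ← Real.sqrt_inv, ← Real.sqrt_mul (by positivity),
      ← Real.sqrt_mul (by positivity), ← Real.sqrt_inv]
    congr 1
    rw [hB]; field_simp
  calc (√(2*π*a))⁻¹ * (√(2*π*b))⁻¹ * rexp (-y^2/(2*(a+b))) * √(π/B)
      = ((√(2*π*a))⁻¹ * (√(2*π*b))⁻¹ * √(π/B)) * rexp (-y^2/(2*(a+b))) := by ring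
    _ = (√(2*π*(a+b)))⁻¹ * rexp (-y^2/(2*(a+b))) := by rw [hconst]

lemma measurable_pdf2 (v2 : ℝ≥0) :
    Measurable (fun q : ℝ × ℝ => gaussianPDF q.1 v2 q.2) := by
  apply Measurable.ennreal_ofReal
  unfold gaussianPDFReal
  fun_prop

lemma gaussianPDFReal_symm (v : ℝ≥0) (x y : ℝ) :
    gaussianPDFReal x v y = gaussianPDFReal y v x := by
  unfold gaussianPDFReal
  rw [show (y-x)^2 = (x-y)^2 by ring]

lemma pdf_mul_integrable (v1 v2 : ℝ≥0) (y : ℝ) :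
    Integrable (fun x => gaussianPDFReal 0 v1 x * gaussianPDFReal y v2 x) := by
  have h := Integrable.bdd_mul (c := (√(2*π*(v2:ℝ)))⁻¹)
    (f := fun x => gaussianPDFReal y v2 x) (g := fun x => gaussianPDFReal 0 v1 x)
    (integrable_gaussianPDFReal 0 v1)
    (measurable_gaussianPDFReal y v2).aestronglyMeasurable ?_
  · simpa [mul_comm] using h
  · filter_upwards with x
    rw [norm_eq_abs, abs_of_nonneg (gaussianPDFReal_nonneg _ _ _)]
    unfold gaussianPDFReal
    have h1 : rexp (-(x-y)^2/(2*v2)) ≤ 1 := by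
      apply Real.exp_le_one_iff.2
      apply div_nonpos_of_nonpos_of_nonneg
      · nlinarith [sq_nonneg (x-y)]
      · positivity
    nlinarith [inv_nonneg.2 (Real.sqrt_nonneg (2*π*(v2:ℝ)))]

lemma gauss_map_add (v1 v2 : ℝ≥0) (h1 : v1 ≠ 0) (h2 : v2 ≠ 0) :
    Measure.map (fun q : ℝ × ℝ => q.1 + q.2)
        ((gaussianReal 0 v1).prod (gaussianReal 0 v2)) = gaussianReal 0 (v1+v2) := by
  have h12 : v1 + v2 ≠ 0 := by simp [h1]
  ext s hs
  rw [gaussianReal_apply 0 h12 s, Measure.map_apply measurable_add hs,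
    Measure.prod_apply (measurable_add hs)]
  have step1 : ∀ x : ℝ, (gaussianReal 0 v2)
      (Prod.mk x ⁻¹' ((fun q : ℝ × ℝ => q.1 + q.2) ⁻¹' s)) = ∫⁻ y in s, gaussianPDF x v2 y := by
    intro x
    have hpre : Prod.mk x ⁻¹' ((fun q : ℝ × ℝ => q.1 + q.2) ⁻¹' s) = (fun y => x + y) ⁻¹' s := rfl
    rw [hpre, ← Measure.map_apply (measurable_const_add x) hs, gaussianReal_map_const_add,
      zero_add, gaussianReal_apply x h2 s]
  simp_rw [step1]
  rw [gaussianReal_of_var_ne_zero 0 h1,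
    lintegral_withDensity_eq_lintegral_mul _ (measurable_gaussianPDF 0 v1)
      (measurable_pdf2 v2).lintegral_prod_right']
  simp only [Pi.mul_apply]
  have hmul : ∀ x : ℝ, gaussianPDF 0 v1 x * ∫⁻ y in s, gaussianPDF x v2 y
      = ∫⁻ y in s, gaussianPDF 0 v1 x * gaussianPDF x v2 y := by
    intro x
    exact (lintegral_const_mul' _ _ ENNReal.ofReal_ne_top).symm
  simp_rw [hmul]
  have hunc : Measurable (Function.uncurry fun x y => gaussianPDF 0 v1 x * gaussianPDF x v2 y) := by
    have : (Function.uncurry fun x y => gaussianPDF 0 v1 x * gaussianPDF x v2 y)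
        = fun q : ℝ × ℝ => gaussianPDF 0 v1 q.1 * gaussianPDF q.1 v2 q.2 := rfl
    rw [this]
    exact ((measurable_gaussianPDF 0 v1).comp measurable_fst).mul (measurable_pdf2 v2)
  rw [lintegral_lintegral_swap hunc.aemeasurable]
  refine setLIntegral_congr_fun hs (fun y _ => ?_)
  have : ∀ x : ℝ, gaussianPDF 0 v1 x * gaussianPDF x v2 y
      = ENNReal.ofReal (gaussianPDFReal 0 v1 x * gaussianPDFReal y v2 x) := by
    intro x
    rw [gaussianPDF, gaussianPDF, gaussianPDFReal_symm v2 x y,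
      ENNReal.ofReal_mul (gaussianPDFReal_nonneg _ _ _)]
  simp_rw [this]
  rw [← ofReal_integral_eq_lintegral_ofReal (pdf_mul_integrable v1 v2 y)
    (Filter.Eventually.of_forall (fun x => mul_nonneg (gaussianPDFReal_nonneg _ _ _)
      (gaussianPDFReal_nonneg _ _ _))),
    gauss_conv_pdf v1 v2 h1 h2 y, gaussianPDF]

omit [IsProbabilityMeasure (ℙ : Measure Ω)] in
lemma ae_zero_of_map_dirac {X : Ω → ℝ} (hXm : Measurable X)
    (hX : Measure.map X ℙ = gaussianReal 0 0) : ∀ᵐ ω ∂(ℙ : Measure Ω), X ω = 0 := by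
  rw [gaussianReal_zero_var] at hX
  have h0 : (ℙ : Measure Ω) (X ⁻¹' {(0:ℝ)}ᶜ) = 0 := by
    rw [← Measure.map_apply hXm (measurableSet_singleton (0:ℝ)).compl, hX,
      Measure.dirac_apply' _ (measurableSet_singleton (0:ℝ)).compl]
    simp
  rw [ae_iff]
  exact h0

lemma indep_gauss_add {X Y : Ω → ℝ} (hXm : Measurable X) (hYm : Measurable Y)
    (hXY : IndepFun X Y ℙ) {v1 v2 : ℝ≥0}
    (hX : Measure.map X ℙ = gaussianReal 0 v1) (hY : Measure.map Y ℙ = gaussianReal 0 v2) :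
    Measure.map (fun ω => X ω + Y ω) ℙ = gaussianReal 0 (v1+v2) := by
  by_cases h1 : v1 = 0
  · subst h1
    have hae := ae_zero_of_map_dirac hXm hX
    have : (fun ω => X ω + Y ω) =ᵐ[(ℙ : Measure Ω)] Y := by
      filter_upwards [hae] with ω h; rw [h, zero_add]
    rw [Measure.map_congr this, hY, zero_add]
  by_cases h2 : v2 = 0
  · subst h2
    have hae := ae_zero_of_map_dirac hYm hY
    have : (fun ω => X ω + Y ω) =ᵐ[(ℙ : Measure Ω)] X := by
      filter_upwards [hae] with ω h; rw [h, add_zero]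
    rw [Measure.map_congr this, hX, add_zero]
  have hpair : Measure.map (fun ω => (X ω, Y ω)) ℙ
      = (Measure.map X ℙ).prod (Measure.map Y ℙ) :=
    (indepFun_iff_map_prod_eq_prod_map_map hXm.aemeasurable hYm.aemeasurable).mp hXY
  have : (fun ω => X ω + Y ω) = (fun q : ℝ × ℝ => q.1 + q.2) ∘ (fun ω => (X ω, Y ω)) := rfl
  rw [this, ← Measure.map_map measurable_add (hXm.prodMk hYm), hpair, hX, hY,
    gauss_map_add v1 v2 h1 h2]

lemma indep_gauss_sum {m : ℕ} {Y : Fin m → Ω → ℝ} (hm : ∀ i, Measurable (Y i))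
    (hi : iIndepFun Y ℙ) (w : Fin m → ℝ≥0)
    (hY : ∀ i, Measure.map (Y i) ℙ = gaussianReal 0 (w i)) (s : Finset (Fin m)) :
    Measure.map (fun ω => ∑ i ∈ s, Y i ω) ℙ = gaussianReal 0 (∑ i ∈ s, w i) := by
  classical
  induction s using Finset.induction_on with
  | empty =>
      simp only [Finset.sum_empty]
      rw [Measure.map_const, gaussianReal_zero_var]
      simp
  | @insert i s hnotmem ih =>
      have hsum : (fun ω => ∑ j ∈ insert i s, Y j ω)
          = fun ω => Y i ω + ∑ j ∈ s, Y j ω := by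
        funext ω; rw [Finset.sum_insert hnotmem]
      rw [hsum, Finset.sum_insert hnotmem]
      have hindepi : IndepFun (Y i) (fun ω => ∑ j ∈ s, Y j ω) ℙ := by
        have := (hi.indepFun_finsetSum_of_notMem hm hnotmem).symm
        have heq : (∑ j ∈ s, Y j) = fun ω => ∑ j ∈ s, Y j ω := by
          funext ω; simp [Finset.sum_apply]
        rwa [heq] at this
      exact indep_gauss_add (hm i) (by exact Finset.measurable_sum s (fun j _ => hm j))
        hindepi (hY i) ih

lemma gauss_half (v : ℝ≥0) (hv : v ≠ 0) : (gaussianReal 0 v) (Set.Ici (0:ℝ)) = 1/2 := by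
  set m := gaussianReal 0 v with hm
  have hneg : Measure.map (fun x : ℝ => -1 * x) m = m := by
    rw [hm, gaussianReal_map_const_mul]
    norm_num
  have hIic : m (Set.Iic (0:ℝ)) = m (Set.Ici (0:ℝ)) := by
    conv_lhs => rw [← hneg]
    rw [Measure.map_apply (by fun_prop) measurableSet_Iic]
    congr 1
    ext x
    simp
  have hsing : m ({(0:ℝ)} : Set ℝ) = 0 :=
    (gaussianReal_absolutelyContinuous 0 hv) (Real.volume_singleton)
  have hIio : m (Set.Iio (0:ℝ)) = m (Set.Iic (0:ℝ)) := by
    have : Set.Iic (0:ℝ) = Set.Iio 0 ∪ {0} := by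
      ext x; simp [le_iff_lt_or_eq]
    rw [this]
    exact le_antisymm (measure_mono Set.subset_union_left)
      ((measure_union_le _ _).trans (by rw [hsing, add_zero]))
  have huniv : m (Set.Ici (0:ℝ)) + m (Set.Iio (0:ℝ)) = 1 := by
    rw [← measure_union _ measurableSet_Iio]
    · have : Set.Ici (0:ℝ) ∪ Set.Iio 0 = Set.univ := by
        ext x; simp [le_or_gt]
      rw [this]
      exact measure_univ
    · exact Set.disjoint_left.2 (fun x hx hx2 => absurd (show x < 0 from hx2) (not_lt.2 (show (0:ℝ) ≤ x from hx)))
  rw [hIio, hIic] at huniv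
  rw [← two_mul] at huniv
  rw [ENNReal.eq_div_iff (by norm_num) (by norm_num)]
  exact huniv

lemma gauss_tail (v : ℝ≥0) (hv : v ≠ 0) (t : ℝ) (ht : 0 ≤ t) :
    (gaussianReal 0 v) (Set.Ici t) ≤ ENNReal.ofReal (rexp (-t^2/(2*v)) / 2) := by
  have hvpos : (0:ℝ) < v := by positivity
  have key : ∀ x ∈ Set.Ici t, gaussianPDF 0 v x
      ≤ ENNReal.ofReal (rexp (-t^2/(2*v))) * gaussianPDF t v x := by
    intro x hx
    simp only [Set.mem_Ici] at hx
    rw [gaussianPDF, gaussianPDF, ← ENNReal.ofReal_mul (Real.exp_nonneg _)]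
    apply ENNReal.ofReal_le_ofReal
    unfold gaussianPDFReal
    rw [show rexp (-t^2/(2*v)) * ((√(2*π*v))⁻¹ * rexp (-(x-t)^2/(2*v)))
      = (√(2*π*v))⁻¹ * (rexp (-t^2/(2*v)) * rexp (-(x-t)^2/(2*v))) by ring, ← Real.exp_add]
    apply mul_le_mul_of_nonneg_left _ (by positivity)
    apply Real.exp_le_exp.2
    have h2v : (0:ℝ) < 2*v := by positivity
    rw [← add_div, div_le_div_iff_of_pos_right h2v]
    nlinarith
  calc (gaussianReal 0 v) (Set.Ici t)
      = ∫⁻ x in Set.Ici t, gaussianPDF 0 v x := gaussianReal_apply 0 hv _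
    _ ≤ ∫⁻ x in Set.Ici t, ENNReal.ofReal (rexp (-t^2/(2*v))) * gaussianPDF t v x := by
        apply setLIntegral_mono' measurableSet_Ici key
    _ = ENNReal.ofReal (rexp (-t^2/(2*v))) * ∫⁻ x in Set.Ici t, gaussianPDF t v x :=
        lintegral_const_mul' _ _ ENNReal.ofReal_ne_top
    _ = ENNReal.ofReal (rexp (-t^2/(2*v))) * (gaussianReal t v) (Set.Ici t) := by
        rw [gaussianReal_apply t hv]
    _ = ENNReal.ofReal (rexp (-t^2/(2*v))) * (1/2) := by
        have hmap : (gaussianReal 0 v).map (· + t) = gaussianReal t v := by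
          rw [gaussianReal_map_add_const, zero_add]
        rw [← hmap, Measure.map_apply (by fun_prop) measurableSet_Ici]
        have : (· + t) ⁻¹' Set.Ici t = Set.Ici (0:ℝ) := by
          ext x; simp
        rw [this, gauss_half v hv]
    _ = ENNReal.ofReal (rexp (-t^2/(2*v)) / 2) := by
        rw [ENNReal.ofReal_div_of_pos (by norm_num)]
        norm_num [div_eq_mul_inv]

lemma l1_nonneg {p : ℕ} (b : Fin p → ℝ) : 0 ≤ l1 b :=
  Finset.sum_nonneg (fun j _ => abs_nonneg _)

lemma l2sq_expand {n : ℕ} (e w : Fin n → ℝ) :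
    l2sq (e - w) = l2sq e - 2*(∑ i, e i * w i) + l2sq w := by
  unfold l2sq
  rw [Finset.mul_sum, ← Finset.sum_sub_distrib, ← Finset.sum_add_distrib]
  apply Finset.sum_congr rfl
  intro i _
  simp only [Pi.sub_apply]
  ring

lemma det_bound {n p : ℕ} (hn : 0 < n) (X : Matrix (Fin n) (Fin p) ℝ)
    (σ lam : ℝ) (hσ : 0 < σ) (hlam0 : 0 ≤ lam)
    (e : Fin n → ℝ) (βstar b : Fin p → ℝ)
    (hbasic : (1/n) * l2sq ((X.mulVec βstar + e) - X.mulVec b) + 2*lam*(l1 b)^2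
      ≤ (1/n) * l2sq ((X.mulVec βstar + e) - X.mulVec βstar) + 2*lam*(l1 βstar)^2)
    (hA : ∀ j, |∑ i, X i j * e i| ≤ n*σ*lam) :
    (1/n) * l2sq (X.mulVec b - X.mulVec βstar) ≤ (σ^2 + 4*(l1 βstar)^2) * lam := by
  have hn' : (0:ℝ) < n := by exact_mod_cast hn
  set δ : Fin p → ℝ := b - βstar with hδ
  have hXδ : X.mulVec b - X.mulVec βstar = X.mulVec δ := (Matrix.mulVec_sub X b βstar).symm
  have hfst : (X.mulVec βstar + e) - X.mulVec βstar = e := by abel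
  have hsnd : (X.mulVec βstar + e) - X.mulVec b = e - X.mulVec δ := by
    rw [hδ, Matrix.mulVec_sub]; abel
  rw [hfst, hsnd] at hbasic
  set a := l1 b with ha
  set B := l1 βstar with hB
  have ha0 : 0 ≤ a := l1_nonneg b
  have hB0 : 0 ≤ B := l1_nonneg βstar
  set S := ∑ i, e i * X.mulVec δ i with hSdef
  have hexp : l2sq (e - X.mulVec δ) = l2sq e - 2*S + l2sq (X.mulVec δ) :=
    l2sq_expand e (X.mulVec δ)
  have hSswap : S = ∑ j, δ j * (∑ i, X i j * e i) := by
    rw [hSdef]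
    simp only [Matrix.mulVec, dotProduct, Finset.mul_sum]
    rw [Finset.sum_comm]
    apply Finset.sum_congr rfl
    intro j _
    apply Finset.sum_congr rfl
    intro i _
    ring
  have hl1δ : l1 δ ≤ a + B := by
    rw [ha, hB]
    unfold l1
    rw [← Finset.sum_add_distrib]
    apply Finset.sum_le_sum
    intro j _
    rw [hδ]
    exact abs_sub (b j) (βstar j)
  have hS : S ≤ (n*σ*lam) * (a + B) := by
    rw [hSswap]
    calc ∑ j, δ j * (∑ i, X i j * e i) ≤ ∑ j, |δ j| * (n*σ*lam) := by
          apply Finset.sum_le_sum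
          intro j _
          calc δ j * (∑ i, X i j * e i) ≤ |δ j * (∑ i, X i j * e i)| := le_abs_self _
            _ = |δ j| * |∑ i, X i j * e i| := abs_mul _ _
            _ ≤ |δ j| * (n*σ*lam) := mul_le_mul_of_nonneg_left (hA j) (abs_nonneg _)
      _ = (n*σ*lam) * l1 δ := by rw [← Finset.sum_mul]; unfold l1; ring
      _ ≤ (n*σ*lam) * (a + B) := by
          apply mul_le_mul_of_nonneg_left hl1δ
          positivity
  have hSn : (1/(n:ℝ)) * S ≤ σ * lam * (a + B) := by
    calc (1/(n:ℝ)) * S ≤ (1/(n:ℝ)) * ((n*σ*lam) * (a + B)) :=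
          mul_le_mul_of_nonneg_left hS (by positivity)
      _ = σ * lam * (a + B) := by
          rw [← mul_assoc]
          field_simp
  rw [hXδ]
  have hkey : (1/(n:ℝ)) * l2sq (X.mulVec δ)
      ≤ 2*(σ*lam*(a+B)) + 2*lam*B^2 - 2*lam*a^2 := by
    have hdistrib : (1/(n:ℝ)) * l2sq (e - X.mulVec δ)
        = (1/n)*l2sq e - 2*((1/n)*S) + (1/n)*l2sq (X.mulVec δ) := by
      rw [hexp]; ring
    rw [hdistrib] at hbasic
    linarith
  nlinarith [mul_nonneg hlam0 (sq_nonneg (σ - 2*a)), mul_nonneg hlam0 (sq_nonneg (σ - 2*B))]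

lemma neg_law {X : Ω → ℝ} {V : ℝ≥0}
    (h : Measure.map X ℙ = gaussianReal 0 V) :
    Measure.map (fun ω => -(X ω)) ℙ = gaussianReal 0 V := by
  have h1 := (gaussianReal_const_mul ⟨AEMeasurable.of_map_ne_zero (by rw [h]; exact IsProbabilityMeasure.ne_zero _), h⟩ (-1)).map_eq
  simp only [neg_one_mul, mul_zero] at h1
  rw [h1]
  congr 1
  rw [← NNReal.coe_inj]
  push_cast
  norm_num

end OrganicAux

open OrganicAux

/-- slow-rate prediction error bound for the organic lasso with
λ = √((2 log p + 2L)/n). -/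
theorem organic_lasso_prediction_bound {n p : ℕ} (hn : 0 < n)
    (X : Matrix (Fin n) (Fin p) ℝ) (hX : ∀ j, ∑ i, (X i j)^2 = (n : ℝ))
    (σ : ℝ) (hσ : 0 < σ)
    {Ω : Type} [MeasureSpace Ω] [IsProbabilityMeasure (ℙ : Measure Ω)]
    (ε : Ω → Fin n → ℝ)
    (hmeas : ∀ i, Measurable (fun ω => ε ω i))
    (hgauss : ∀ i, Measure.map (fun ω => ε ω i) ℙ = gaussianReal 0 ⟨σ^2, sq_nonneg σ⟩)
    (hindep : iIndepFun (fun i ω => ε ω i) ℙ)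
    (βstar : Fin p → ℝ) (y : Ω → Fin n → ℝ)
    (hy : ∀ ω, y ω = X.mulVec βstar + ε ω)
    (L : ℝ) (hL : 0 < L)
    (lam : ℝ) (hlam : lam = Real.sqrt ((2*Real.log p + 2*L)/n))
    (βc : Ω → Fin p → ℝ)
    (hβc : ∀ ω (β : Fin p → ℝ),
      (1/n) * l2sq (y ω - X.mulVec (βc ω)) + 2*lam * (l1 (βc ω))^2
        ≤ (1/n) * l2sq (y ω - X.mulVec β) + 2*lam * (l1 β)^2) :
    1 - ENNReal.ofReal (Real.exp (-L))
      ≤ ℙ {ω | (1/n) * l2sq (X.mulVec (βc ω) - X.mulVec βstar)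
          ≤ (σ^2 + 4*(l1 βstar)^2) * Real.sqrt ((2*Real.log p + 2*L)/n)} := by
  classical
  have hn' : (0:ℝ) < n := by exact_mod_cast hn
  by_cases hp : p = 0
  · have hEmpty : IsEmpty (Fin p) := by rw [hp]; infer_instance
    have hall : ∀ ω : Ω, (1/(n:ℝ)) * l2sq (X.mulVec (βc ω) - X.mulVec βstar)
        ≤ (σ^2 + 4*(l1 βstar)^2) * Real.sqrt ((2*Real.log p + 2*L)/n) := by
      intro ω
      have h0 : X.mulVec (βc ω) - X.mulVec βstar = 0 := by
        funext i
        simp [Matrix.mulVec, dotProduct, Finset.univ_eq_empty]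
      rw [h0]
      have h1 : l2sq (0 : Fin n → ℝ) = 0 := by simp [l2sq]
      rw [h1, mul_zero]
      have hB : (0:ℝ) ≤ σ^2 + 4*(l1 βstar)^2 := by positivity
      exact mul_nonneg hB (Real.sqrt_nonneg _)
    have hset : {ω : Ω | (1/(n:ℝ)) * l2sq (X.mulVec (βc ω) - X.mulVec βstar)
        ≤ (σ^2 + 4*(l1 βstar)^2) * Real.sqrt ((2*Real.log p + 2*L)/n)} = Set.univ :=
      Set.eq_univ_of_forall hall
    rw [hset, measure_univ]
    exact tsub_le_self
  -- p ≥ 1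
  have hp1 : (1:ℝ) ≤ p := by
    have : 1 ≤ p := Nat.one_le_iff_ne_zero.2 hp
    exact_mod_cast this
  have hp0 : (0:ℝ) < p := by linarith
  have hlogp : 0 ≤ Real.log p := Real.log_nonneg hp1
  have harg : 0 ≤ (2*Real.log p + 2*L)/(n:ℝ) := by positivity
  have hlam0 : 0 ≤ lam := hlam ▸ Real.sqrt_nonneg _
  have hlamsq : lam^2 = (2*Real.log p + 2*L)/(n:ℝ) := by
    rw [hlam, Real.sq_sqrt harg]
  set v : ℝ≥0 := ⟨σ^2, sq_nonneg σ⟩ with hv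
  set u : ℝ := (n:ℝ)*σ*lam with hu
  have hu0 : 0 ≤ u := by positivity
  set Z : Fin p → Ω → ℝ := fun j ω => ∑ i, X i j * ε ω i with hZ
  have hZmeas : ∀ j, Measurable (Z j) := fun j =>
    Finset.measurable_sum _ (fun i _ => (hmeas i).const_mul _)
  -- law of Z j
  set w : Fin p → Fin n → ℝ≥0 := fun j i => ⟨(X i j)^2, sq_nonneg _⟩ * v with hw
  have hZlaw : ∀ j, Measure.map (Z j) ℙ = gaussianReal 0 (∑ i, w j i) := by
    intro j
    have hYm : ∀ i, Measurable (fun ω => X i j * ε ω i) :=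
      fun i => (hmeas i).const_mul _
    have hYindep : iIndepFun (fun i ω => X i j * ε ω i) ℙ := by
      have := hindep.comp (fun i => fun x : ℝ => X i j * x)
        (fun i => measurable_const_mul _)
      exact this
    have hYlaw : ∀ i, Measure.map (fun ω => X i j * ε ω i) ℙ = gaussianReal 0 (w j i) := by
      intro i
      have := (gaussianReal_const_mul ⟨(hmeas i).aemeasurable, hgauss i⟩ (X i j)).map_eq
      rw [mul_zero] at this
      exact this
    have := indep_gauss_sum hYm hYindep (w j) hYlaw Finset.univ
    exact this
  -- variance value
  have hwsum : ∀ j, ((∑ i, w j i : ℝ≥0) : ℝ) = (n:ℝ) * σ^2 := by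
    intro j
    push_cast
    have : ∀ i, ((w j i : ℝ≥0) : ℝ) = (X i j)^2 * σ^2 := fun i => rfl
    rw [Finset.sum_congr rfl (fun i _ => this i), ← Finset.sum_mul, hX j]
  have hwne : ∀ j, (∑ i, w j i : ℝ≥0) ≠ 0 := by
    intro j
    intro hcon
    have : ((∑ i, w j i : ℝ≥0) : ℝ) = 0 := by rw [hcon]; simp
    rw [hwsum j] at this
    have hpos : (0:ℝ) < n * σ^2 := by positivity
    linarith
  -- tail computation
  have htail_val : ∀ j, rexp (-u^2/(2*((∑ i, w j i : ℝ≥0) : ℝ))) / 2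
      = Real.exp (-L) / (2*p) := by
    intro j
    rw [hwsum]
    have hexp_arg : -u^2/(2*((n:ℝ) * σ^2)) = -(Real.log p + L) := by
      rw [hu]
      have : ((n:ℝ)*σ*lam)^2 = (n:ℝ)^2 * σ^2 * lam^2 := by ring
      rw [this, hlamsq]
      field_simp
    rw [hexp_arg, neg_add, Real.exp_add, Real.exp_neg, Real.exp_log hp0]
    field_simp
  have htail : ∀ j, (gaussianReal 0 (∑ i, w j i)) (Set.Ici u)
      ≤ ENNReal.ofReal (Real.exp (-L) / (2*p)) := by
    intro j
    calc (gaussianReal 0 (∑ i, w j i)) (Set.Ici u)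
        ≤ ENNReal.ofReal (rexp (-u^2/(2*((∑ i, w j i : ℝ≥0) : ℝ))) / 2) :=
          gauss_tail _ (hwne j) u hu0
      _ = ENNReal.ofReal (Real.exp (-L) / (2*p)) := by rw [htail_val j]
  -- probability of each bad event
  have hbadB : ∀ j, ℙ (Z j ⁻¹' Set.Ici u) ≤ ENNReal.ofReal (Real.exp (-L) / (2*p)) := by
    intro j
    rw [← Measure.map_apply (hZmeas j) measurableSet_Ici, hZlaw j]
    exact htail j
  have hbadC : ∀ j, ℙ ((fun ω => -(Z j ω)) ⁻¹' Set.Ici u)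
      ≤ ENNReal.ofReal (Real.exp (-L) / (2*p)) := by
    intro j
    have hneglaw : Measure.map (fun ω => -(Z j ω)) ℙ = gaussianReal 0 (∑ i, w j i) :=
      neg_law (hZlaw j)
    rw [← Measure.map_apply (show Measurable (fun ω => -(Z j ω)) from (hZmeas j).neg) measurableSet_Ici, hneglaw]
    exact htail j
  -- the good event
  set A : Set Ω := {ω | ∀ j, |Z j ω| ≤ u} with hA
  have hsub : A ⊆ {ω | (1/(n:ℝ)) * l2sq (X.mulVec (βc ω) - X.mulVec βstar)
      ≤ (σ^2 + 4*(l1 βstar)^2) * Real.sqrt ((2*Real.log p + 2*L)/n)} := by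
    intro ω hω
    simp only [Set.mem_setOf_eq] at hω ⊢
    rw [← hlam]
    apply det_bound hn X σ lam hσ hlam0 (ε ω) βstar (βc ω)
    · have := hβc ω βstar
      rwa [hy ω] at this
    · intro j
      exact hω j
  -- complement bound
  have hcomplsub : Aᶜ ⊆ ⋃ j, (Z j ⁻¹' Set.Ici u ∪ (fun ω => -(Z j ω)) ⁻¹' Set.Ici u) := by
    intro ω hω
    simp only [hA, Set.mem_compl_iff, Set.mem_setOf_eq, not_forall] at hω
    obtain ⟨j, hj⟩ := hω
    have : u ≤ Z j ω ∨ u ≤ -(Z j ω) := by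
      rcases le_abs.1 (le_of_lt (not_le.1 hj)) with h | h
      · exact Or.inl h
      · exact Or.inr h
    refine Set.mem_iUnion.2 ⟨j, ?_⟩
    rcases this with h | h
    · exact Or.inl h
    · exact Or.inr h
  have hcompl : ℙ Aᶜ ≤ ENNReal.ofReal (Real.exp (-L)) := by
    calc ℙ Aᶜ ≤ ℙ (⋃ j, (Z j ⁻¹' Set.Ici u ∪ (fun ω => -(Z j ω)) ⁻¹' Set.Ici u)) :=
          measure_mono hcomplsub
      _ ≤ ∑ j, ℙ (Z j ⁻¹' Set.Ici u ∪ (fun ω => -(Z j ω)) ⁻¹' Set.Ici u) := by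
          rw [← tsum_fintype (L := SummationFilter.unconditional _)]
          exact measure_iUnion_le _
      _ ≤ ∑ _j : Fin p, ENNReal.ofReal (Real.exp (-L) / p) := by
          apply Finset.sum_le_sum
          intro j _
          calc ℙ (Z j ⁻¹' Set.Ici u ∪ (fun ω => -(Z j ω)) ⁻¹' Set.Ici u)
              ≤ ℙ (Z j ⁻¹' Set.Ici u) + ℙ ((fun ω => -(Z j ω)) ⁻¹' Set.Ici u) :=
                measure_union_le _ _
            _ ≤ ENNReal.ofReal (Real.exp (-L) / (2*p))
                + ENNReal.ofReal (Real.exp (-L) / (2*p)) :=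
                add_le_add (hbadB j) (hbadC j)
            _ = ENNReal.ofReal (Real.exp (-L) / p) := by
                rw [← ENNReal.ofReal_add (by positivity) (by positivity)]
                congr 1
                field_simp
                ring
      _ = (p : ℝ≥0∞) * ENNReal.ofReal (Real.exp (-L) / p) := by
          rw [Finset.sum_const, Finset.card_univ, Fintype.card_fin, nsmul_eq_mul]
      _ = ENNReal.ofReal (Real.exp (-L)) := by
          rw [← ENNReal.ofReal_natCast p, ← ENNReal.ofReal_mul (by positivity)]
          congr 1
          field_simp
  -- conclude
  calc 1 - ENNReal.ofReal (Real.exp (-L))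
      ≤ ℙ A := by
        rw [tsub_le_iff_right]
        calc (1:ℝ≥0∞) = ℙ (Set.univ : Set Ω) := measure_univ.symm
          _ = ℙ (A ∪ Aᶜ) := by rw [Set.union_compl_self]
          _ ≤ ℙ A + ℙ Aᶜ := measure_union_le _ _
          _ ≤ ℙ A + ENNReal.ofReal (Real.exp (-L)) := add_le_add_right hcompl _
    _ ≤ ℙ {ω | (1/(n:ℝ)) * l2sq (X.mulVec (βc ω) - X.mulVec βstar)
          ≤ (σ^2 + 4*(l1 βstar)^2) * Real.sqrt ((2*Real.log p + 2*L)/n)} :=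
        measure_mono hsub
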